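/- Let A ⊆ D and suppose f(X) is integrable. If f(X) = E[f(X) | σ(X_{D∖A})] almost surely, then f(X) = f(X^{∖A}) almost surely. -/

import Mathlib

open MeasureTheory ProbabilityTheory

/-- The σ-algebra `σ(X_{D∖A})` generated by the subvector of `X` indexed by `D ∖ A`. -/
def sigmaRestrict {Ω : Type*} {d : ℕ} (X : Ω → Fin d → ℝ) (A : Finset (Fin d)) :
    MeasurableSpace Ω :=
  MeasurableSpace.comap (fun ω => (fun i : {i : Fin d // i ∈ Aᶜ} => X ω i)) inferInstance

/-- If `f(X) = E[f(X) | σ(X_{D∖A})]` almost surely, then `f(X) = f(X^{∖A})` almost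
surely.  Here `X'` plays the role of `X^{∖A}`: it agrees with `X` on the coordinates
in `D∖A` almost surely, and `X` and `X'` are conditionally i.i.d. given `σ(X_{D∖A})`
(expressed by the product formula for conditional expectations of bounded measurable
functions of `X` and `X'`). -/
theorem stmt1
    {Ω : Type*} [MeasurableSpace Ω] (μ : Measure Ω) [IsProbabilityMeasure μ]
    {d : ℕ} (X : Ω → Fin d → ℝ) (hX : Measurable X)
    (f : (Fin d → ℝ) → ℝ) (hf : Measurable f)
    (A : Finset (Fin d)) (X' : Ω → (Fin d → ℝ)) (hX' : Measurable X')
    -- (a) `X` and `X'` are conditionally i.i.d. given `σ(X_{D∖A})`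
    (hiid : ∀ (φ φ' : (Fin d → ℝ) → ℝ),
      Measurable φ → Measurable φ' →
      (∃ C, ∀ x, |φ x| ≤ C) → (∃ C, ∀ x, |φ' x| ≤ C) →
      μ[(fun ω => φ (X ω) * φ' (X' ω)) | sigmaRestrict X A]
        =ᵐ[μ] fun ω => (μ[(fun ω => φ (X ω)) | sigmaRestrict X A]) ω *
                        (μ[(fun ω => φ' (X ω)) | sigmaRestrict X A]) ω)
    -- (b) `X'` agrees with `X` on the coordinates outside `A`, almost surely
    (hfix : ∀ᵐ ω ∂μ, ∀ i ∉ A, X' ω i = X ω i)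
    -- integrability of `f(X)`
    (hfint : Integrable (fun ω => f (X ω)) μ)
    -- hypothesis: `f(X) = E[f(X) | σ(X_{D∖A})]` a.s.
    (h : (fun ω => f (X ω)) =ᵐ[μ] μ[(fun ω => f (X ω)) | sigmaRestrict X A]) :
    (fun ω => f (X ω)) =ᵐ[μ] fun ω => f (X' ω) := by
  classical
  rename_i mΩ _
  have hle : sigmaRestrict X A ≤ mΩ := by
    rintro s ⟨t, ht, rfl⟩
    exact (measurable_pi_lambda _ (fun i => (measurable_pi_apply _).comp hX)) ht
  haveI : SigmaFinite (μ.trim hle) := by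
    haveI : IsFiniteMeasure (μ.trim hle) := isFiniteMeasure_trim hle
    infer_instance
  set φ : (Fin d → ℝ) → ℝ := fun x => Real.arctan (f x) with hφdef
  have hφm : Measurable φ := Real.measurable_arctan.comp hf
  have hφb : ∀ x, |φ x| ≤ Real.pi / 2 := fun x => abs_le.mpr ⟨(Real.neg_pi_div_two_lt_arctan _).le, (Real.arctan_lt_pi_div_two _).le⟩
  have hbdd : ∃ C, ∀ x, |φ x| ≤ C := ⟨_, hφb⟩
  have hint : ∀ (g : Ω → ℝ) (C : ℝ), Measurable g → (∀ ω, |g ω| ≤ C) → Integrable g μ := by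
    intro g C hg hb
    exact Integrable.mono' (integrable_const C) hg.aestronglyMeasurable
      (ae_of_all _ fun ω => by simpa using hb ω)
  have hφX : Integrable (fun ω => φ (X ω)) μ := hint _ _ (hφm.comp hX) (fun ω => hφb _)
  have hφX' : Integrable (fun ω => φ (X' ω)) μ := hint _ _ (hφm.comp hX') (fun ω => hφb _)
  -- φ(X) is a.e. strongly measurable wrt the sub-σ-algebra
  have hmeas' : AEStronglyMeasurable[sigmaRestrict X A] (fun ω => φ (X ω)) μ := by
    refine ⟨fun ω => Real.arctan ((μ[(fun ω => f (X ω)) | sigmaRestrict X A]) ω), ?_, ?_⟩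
    · exact Real.continuous_arctan.comp_stronglyMeasurable stronglyMeasurable_condExp
    · filter_upwards [h] with ω hω
      simp [hφdef, hω]
  have hce : μ[(fun ω => φ (X ω)) | sigmaRestrict X A] =ᵐ[μ] fun ω => φ (X ω) :=
    condExp_of_aestronglyMeasurable' hle hmeas' hφX
  -- Key integrals
  have hprod : Integrable (fun ω => φ (X ω) * φ (X' ω)) μ :=
    hint _ ((Real.pi/2)*(Real.pi/2)) ((hφm.comp hX).mul (hφm.comp hX'))
      (fun ω => by
        rw [abs_mul]
        exact mul_le_mul (hφb _) (hφb _) (abs_nonneg _) (by linarith [Real.pi_pos]))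
  have hsqX : Integrable (fun ω => φ (X ω) ^ 2) μ :=
    hint _ ((Real.pi/2)^2) ((hφm.comp hX).pow_const 2)
      (fun ω => by
        rw [abs_pow]
        exact pow_le_pow_left₀ (abs_nonneg _) (hφb _) 2)
  have hsqX' : Integrable (fun ω => φ (X' ω) ^ 2) μ :=
    hint _ ((Real.pi/2)^2) ((hφm.comp hX').pow_const 2)
      (fun ω => by
        rw [abs_pow]
        exact pow_le_pow_left₀ (abs_nonneg _) (hφb _) 2)
  -- key1 : ∫ φ(X)φ(X') = ∫ φ(X)²
  have key1 : ∫ ω, φ (X ω) * φ (X' ω) ∂μ = ∫ ω, φ (X ω) ^ 2 ∂μ := by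
    have h1 := hiid φ φ hφm hφm hbdd hbdd
    calc ∫ ω, φ (X ω) * φ (X' ω) ∂μ
        = ∫ ω, (μ[(fun ω => φ (X ω) * φ (X' ω)) | sigmaRestrict X A]) ω ∂μ :=
          (integral_condExp hle).symm
      _ = ∫ ω, (μ[(fun ω => φ (X ω)) | sigmaRestrict X A]) ω *
              (μ[(fun ω => φ (X ω)) | sigmaRestrict X A]) ω ∂μ :=
          integral_congr_ae h1
      _ = ∫ ω, φ (X ω) ^ 2 ∂μ := by
          refine integral_congr_ae ?_
          filter_upwards [hce] with ω hω
          rw [hω]; ring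
  -- key2 : ∫ φ(X')² = ∫ φ(X)²
  have key2 : ∫ ω, φ (X' ω) ^ 2 ∂μ = ∫ ω, φ (X ω) ^ 2 ∂μ := by
    have hb2 : ∃ C, ∀ x : Fin d → ℝ, |φ x ^ 2| ≤ C :=
      ⟨(Real.pi/2)^2, fun x => by
        rw [abs_pow]; exact pow_le_pow_left₀ (abs_nonneg _) (hφb _) 2⟩
    have h1 := hiid (fun _ => 1) (fun x => φ x ^ 2) measurable_const (hφm.pow_const 2)
      ⟨1, fun x => by norm_num⟩ hb2
    have hone : μ[(fun ω => (1:ℝ)) | sigmaRestrict X A] =ᵐ[μ] fun _ => (1:ℝ) := by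
      rw [condExp_const hle]
    have hintX'2 : Integrable (fun ω => (1:ℝ) * φ (X' ω) ^ 2) μ := by
      simpa using hsqX'
    calc ∫ ω, φ (X' ω) ^ 2 ∂μ
        = ∫ ω, (1:ℝ) * φ (X' ω) ^ 2 ∂μ := by simp
      _ = ∫ ω, (μ[(fun ω => (1:ℝ) * φ (X' ω) ^ 2) | sigmaRestrict X A]) ω ∂μ :=
          (integral_condExp hle).symm
      _ = ∫ ω, (μ[(fun ω => (1:ℝ)) | sigmaRestrict X A]) ω *
              (μ[(fun ω => φ (X ω) ^ 2) | sigmaRestrict X A]) ω ∂μ :=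
          integral_congr_ae h1
      _ = ∫ ω, (μ[(fun ω => φ (X ω) ^ 2) | sigmaRestrict X A]) ω ∂μ := by
          refine integral_congr_ae ?_
          filter_upwards [hone] with ω hω
          rw [hω]; ring
      _ = ∫ ω, φ (X ω) ^ 2 ∂μ := integral_condExp hle
  -- the second moment of the difference vanishes
  have hdiff_int : Integrable (fun ω => (φ (X ω) - φ (X' ω)) ^ 2) μ := by
    have : (fun ω => (φ (X ω) - φ (X' ω)) ^ 2)
        = fun ω => φ (X ω) ^ 2 - 2 * (φ (X ω) * φ (X' ω)) + φ (X' ω) ^ 2 := by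
      funext ω; ring
    rw [this]
    exact (hsqX.sub (hprod.const_mul 2)).add hsqX'
  have hzero : ∫ ω, (φ (X ω) - φ (X' ω)) ^ 2 ∂μ = 0 := by
    have : (fun ω => (φ (X ω) - φ (X' ω)) ^ 2)
        = fun ω => φ (X ω) ^ 2 - 2 * (φ (X ω) * φ (X' ω)) + φ (X' ω) ^ 2 := by
      funext ω; ring
    have hI : Integrable (fun ω => φ (X ω) ^ 2 - 2 * (φ (X ω) * φ (X' ω))) μ := by
      exact hsqX.sub (hprod.const_mul 2)
    rw [this, integral_add hI hsqX', integral_sub hsqX (hprod.const_mul 2),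
      integral_const_mul, key1, key2]
    ring
  have hae0 : (fun ω => (φ (X ω) - φ (X' ω)) ^ 2) =ᵐ[μ] 0 :=
    (integral_eq_zero_iff_of_nonneg_ae (ae_of_all _ fun ω => sq_nonneg _) hdiff_int).mp hzero
  filter_upwards [hae0] with ω hω
  have : φ (X ω) = φ (X' ω) := by
    have := sq_eq_zero_iff.mp hω
    linarith
  exact Real.arctan_injective this
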